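/- Let X be a nonempty compact zero-dimensional Hausdorff space, Z = ω × X with ω discrete, and Z* = βZ \ Z. The injective homomorphism i : H(X) → H(Z*), i(f) = f^β (the restriction to Z* of the Stone extension of the homeomorphism f^ω(n,x) = (n, f(x)) of Z), is an open map from H(X) with the compact-open topology onto its image i(H(X)) with the subspace topology inherited from H(Z*) with the compact-open topology; that is, for every open V ⊆ H(X), the set i(V) is open in i(H(X)). -/

import Mathlib

open Set Topology TopologicalSpace

/-- The compact-open topology on the group of self-homeomorphisms of a space:
the topology induced from the compact-open topology on `C(X, X)`. -/
instance homeomorphCompactOpen (X : Type*) [TopologicalSpace X] :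
    TopologicalSpace (X ≃ₜ X) :=
  TopologicalSpace.induced (fun h : X ≃ₜ X => (h : C(X, X))) ContinuousMap.compactOpen

/-- The group of self-homeomorphisms of a space, under composition. -/
instance homeomorphGroup (X : Type*) [TopologicalSpace X] : Group (X ≃ₜ X) where
  mul f g := g.trans f
  one := Homeomorph.refl X
  inv := Homeomorph.symm
  mul_assoc _ _ _ := Homeomorph.ext fun _ => rfl
  one_mul _ := Homeomorph.ext fun _ => rfl
  mul_one _ := Homeomorph.ext fun _ => rfl
  inv_mul_cancel f := Homeomorph.ext fun x => f.symm_apply_apply x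

/-- The weight of a topological space: the least cardinality of a base of its topology. -/
noncomputable def TopologicalSpace.weight (X : Type u) [TopologicalSpace X] : Cardinal.{u} :=
  ⨅ B : {B : Set (Set X) // TopologicalSpace.IsTopologicalBasis B}, Cardinal.mk B.1

/-- A set is an Fσ-set if it is a countable union of closed sets. -/
def IsFsigma {X : Type*} [TopologicalSpace X] (s : Set X) : Prop :=
  ∃ F : ℕ → Set X, (∀ n, IsClosed (F n)) ∧ s = ⋃ n, F n

/-- An F-space (for normal spaces): disjoint open Fσ-sets have disjoint closures. -/
def IsFSpace (X : Type*) [TopologicalSpace X] : Prop :=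
  ∀ U V : Set X, IsOpen U → IsOpen V → IsFsigma U → IsFsigma V → Disjoint U V →
    Disjoint (closure U) (closure V)

/-- A Parovičenko space: a compact zero-dimensional F-space of weight `𝔠` in which
every nonempty Gδ-set has infinite interior. -/
structure IsParovicenko (X : Type u) [TopologicalSpace X] : Prop where
  compact : CompactSpace X
  t2 : T2Space X
  zeroDim : TopologicalSpace.IsTopologicalBasis {s : Set X | IsClopen s}
  fSpace : IsFSpace X
  weight_eq : TopologicalSpace.weight X = Cardinal.continuum
  gdelta_int : ∀ s : Set X, IsGδ s → s.Nonempty → (interior s).Infinite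

/-- The Gδ-modification of a topology: the topology generated by the Gδ-sets. -/
def gdeltaMod {X : Type*} (t : TopologicalSpace X) : TopologicalSpace X :=
  TopologicalSpace.generateFrom {s : Set X | @IsGδ X t s}

/-- The Čech–Stone remainder `βα \ α` of a space `α`. -/
abbrev CechStoneRemainder (α : Type u) [TopologicalSpace α] : Type u :=
  {p : StoneCech α // p ∉ Set.range (stoneCechUnit : α → StoneCech α)}

/-- `ω* = βω \ ω`, the Čech–Stone remainder of the countable discrete space `ω`. -/
abbrev OmegaStar : Type := CechStoneRemainder ℕ

variable {X : Type u} [TopologicalSpace X]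

/-- `f^ω : ω × X ≃ₜ ω × X`, `(n, x) ↦ (n, f x)`. -/
def fOmega (f : X ≃ₜ X) : (ℕ × X) ≃ₜ (ℕ × X) := (Homeomorph.refl ℕ).prodCongr f

/-- The Stone extension `βf^ω : β(ω × X) → β(ω × X)` of `f^ω` (composed with the unit). -/
noncomputable def betaFOmega (f : X ≃ₜ X) : StoneCech (ℕ × X) → StoneCech (ℕ × X) :=
  stoneCechExtend (continuous_stoneCechUnit.comp (fOmega f).continuous)

/-- For `E ⊆ α`, the trace `E* = cl_{βα} E ∩ (βα \ α)` of `E` on the remainder. -/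
def starSet {α : Type u} [TopologicalSpace α] (E : Set α) : Set (StoneCech α) :=
  closure (stoneCechUnit '' E) ∩ {p | p ∉ Set.range (stoneCechUnit : α → StoneCech α)}

section AuxProof

variable {Y : Type u} [TopologicalSpace Y]

/-- For a clopen set `E ⊆ ω × Y`, the closures in `β(ω × Y)` of the images of `E` and of its
complement are disjoint. -/
lemma aux_disjoint {E : Set (ℕ × Y)} (hE : IsClopen E) :
    Disjoint (closure (stoneCechUnit '' E) : Set (StoneCech (ℕ × Y)))
      (closure (stoneCechUnit '' Eᶜ)) := by
  have hg : Continuous E.boolIndicator := (continuous_boolIndicator_iff_isClopen E).2 hE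
  have h1 : closure (stoneCechUnit '' E) ⊆ stoneCechExtend hg ⁻¹' {true} := by
    refine closure_minimal ?_ ((isClosed_discrete _).preimage (continuous_stoneCechExtend hg))
    rintro _ ⟨z, hz, rfl⟩
    have hz' := congrFun (stoneCechExtend_extends hg) z
    simp only [Function.comp_apply] at hz'
    simp only [Set.mem_preimage, Set.mem_singleton_iff, hz']
    exact (E.mem_iff_boolIndicator z).1 hz
  have h2 : closure (stoneCechUnit '' Eᶜ) ⊆ stoneCechExtend hg ⁻¹' {false} := by
    refine closure_minimal ?_ ((isClosed_discrete _).preimage (continuous_stoneCechExtend hg))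
    rintro _ ⟨z, hz, rfl⟩
    have hz' := congrFun (stoneCechExtend_extends hg) z
    simp only [Function.comp_apply] at hz'
    simp only [Set.mem_preimage, Set.mem_singleton_iff, hz']
    exact (E.notMem_iff_boolIndicator z).1 hz
  refine Set.disjoint_of_subset h1 h2 (Disjoint.preimage _ ?_)
  simp

/-- The closures of the images of `E` and `Eᶜ` cover `β(ω × Y)`. -/
lemma aux_cover (E : Set (ℕ × Y)) :
    closure (stoneCechUnit '' E) ∪ closure (stoneCechUnit '' Eᶜ) =
      (Set.univ : Set (StoneCech (ℕ × Y))) := by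
  apply Set.eq_univ_of_univ_subset
  have hsub : Set.range (stoneCechUnit : ℕ × Y → StoneCech (ℕ × Y)) ⊆
      closure (stoneCechUnit '' E) ∪ closure (stoneCechUnit '' Eᶜ) := by
    rintro _ ⟨z, rfl⟩
    by_cases hz : z ∈ E
    · exact Or.inl (subset_closure ⟨z, hz, rfl⟩)
    · exact Or.inr (subset_closure ⟨z, hz, rfl⟩)
  calc (Set.univ : Set (StoneCech (ℕ × Y)))
      = closure (Set.range (stoneCechUnit : ℕ × Y → StoneCech (ℕ × Y))) :=
        (denseRange_stoneCechUnit.closure_eq).symm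
    _ ⊆ closure (closure (stoneCechUnit '' E) ∪ closure (stoneCechUnit '' Eᶜ)) :=
        closure_mono hsub
    _ = _ := (isClosed_closure.union isClosed_closure).closure_eq

/-- For clopen `E`, the closure of the image of `E` in `β(ω × Y)` is clopen. -/
lemma aux_clopen {E : Set (ℕ × Y)} (hE : IsClopen E) :
    IsClopen (closure (stoneCechUnit '' E) : Set (StoneCech (ℕ × Y))) := by
  refine ⟨isClosed_closure, ?_⟩
  have hcompl : (closure (stoneCechUnit '' E) : Set (StoneCech (ℕ × Y)))ᶜ =
      closure (stoneCechUnit '' Eᶜ) := by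
    apply Set.Subset.antisymm
    · intro p hp
      have hp2 : p ∈ closure (stoneCechUnit '' E) ∪ closure (stoneCechUnit '' Eᶜ) := by
        rw [aux_cover E]; trivial
      exact hp2.resolve_left hp
    · intro p hp hp2
      exact Set.disjoint_left.mp (aux_disjoint hE) hp2 hp
  rw [← isClosed_compl_iff, hcompl]
  exact isClosed_closure

/-- The image of a slice `{n} × Y` is open in `β(ω × Y)` when `Y` is compact. -/
lemma aux_slice [CompactSpace Y] (n : ℕ) :
    IsOpen (stoneCechUnit '' ({n} ×ˢ (Set.univ : Set Y)) : Set (StoneCech (ℕ × Y))) := by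
  have hC : IsClopen (({n} : Set ℕ) ×ˢ (Set.univ : Set Y)) :=
    (isClopen_discrete _).prod isClopen_univ
  have hcomp : IsCompact (stoneCechUnit '' (({n} : Set ℕ) ×ˢ (Set.univ : Set Y)) :
      Set (StoneCech (ℕ × Y))) :=
    (isCompact_singleton.prod isCompact_univ).image continuous_stoneCechUnit
  have hcl := hcomp.isClosed.closure_eq
  have hopen := (aux_clopen hC).2
  rwa [hcl] at hopen

/-- The range of the unit `ω × Y → β(ω × Y)` is open when `Y` is compact. -/
lemma aux_range_open [CompactSpace Y] :
    IsOpen (Set.range (stoneCechUnit : ℕ × Y → StoneCech (ℕ × Y))) := by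
  have hr : Set.range (stoneCechUnit : ℕ × Y → StoneCech (ℕ × Y)) =
      ⋃ n : ℕ, stoneCechUnit '' (({n} : Set ℕ) ×ˢ (Set.univ : Set Y)) := by
    ext p
    constructor
    · rintro ⟨⟨n, y⟩, rfl⟩
      exact Set.mem_iUnion.2 ⟨n, Set.mem_image_of_mem _ (Set.mk_mem_prod rfl trivial)⟩
    · intro hp
      obtain ⟨n, z, _, rfl⟩ := Set.mem_iUnion.1 hp
      exact ⟨z, rfl⟩
  rw [hr]
  exact isOpen_iUnion fun n => aux_slice n

/-- The clopen subset `(ω × A)*` of the remainder determined by a set `A ⊆ Y`. -/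
def starClopen (A : Set Y) : Set (CechStoneRemainder (ℕ × Y)) :=
  Subtype.val ⁻¹' closure (stoneCechUnit '' ((Set.univ : Set ℕ) ×ˢ A))

lemma starClopen_open {A : Set Y} (hA : IsClopen A) : IsOpen (starClopen A) :=
  (aux_clopen (isClopen_univ.prod hA)).2.preimage continuous_subtype_val

lemma starClopen_compact [CompactSpace Y] (A : Set Y) : IsCompact (starClopen A) := by
  rw [Subtype.isCompact_iff]
  have himg : Subtype.val '' starClopen A =
      closure (stoneCechUnit '' ((Set.univ : Set ℕ) ×ˢ A)) ∩
        (Set.range (stoneCechUnit : ℕ × Y → StoneCech (ℕ × Y)))ᶜ := by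
    rw [starClopen, Set.image_preimage_eq_inter_range, Subtype.range_coe_subtype]
    rfl
  rw [himg]
  exact (isClosed_closure.inter aux_range_open.isClosed_compl).isCompact

lemma fOmega_image_prod {X : Type u} [TopologicalSpace X] (f : X ≃ₜ X) (A : Set X) :
    fOmega f '' ((Set.univ : Set ℕ) ×ˢ A) = (Set.univ : Set ℕ) ×ˢ (f '' A) := by
  ext ⟨n, y⟩
  constructor
  · rintro ⟨⟨m, x⟩, ⟨-, hx⟩, heq⟩
    have he : fOmega f (m, x) = (m, f x) := rfl
    rw [he] at heq
    rw [← heq]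
    exact ⟨trivial, Set.mem_image_of_mem _ hx⟩
  · rintro ⟨-, x, hx, rfl⟩
    exact ⟨(n, x), ⟨trivial, hx⟩, rfl⟩

lemma betaFOmega_image_closure {X : Type u} [TopologicalSpace X] (f : X ≃ₜ X)
    (S : Set (ℕ × X)) :
    betaFOmega f '' closure (stoneCechUnit '' S) ⊆
      closure (stoneCechUnit '' (fOmega f '' S)) := by
  have h1 : betaFOmega f '' (stoneCechUnit '' S) = stoneCechUnit '' (fOmega f '' S) := by
    rw [← Set.image_comp, ← Set.image_comp]
    refine Set.image_congr fun z _ => ?_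
    exact congrFun (stoneCechExtend_extends (continuous_stoneCechUnit.comp (fOmega f).continuous)) z
  calc betaFOmega f '' closure (stoneCechUnit '' S)
      ⊆ closure (betaFOmega f '' (stoneCechUnit '' S)) :=
        image_closure_subset_closure_image (continuous_stoneCechExtend _)
    _ = _ := by rw [h1]

/-- **Key lemma.** For clopen `A, B ⊆ X` and a homeomorphism `F` of the remainder lifting
`βf^ω`, `F` maps `(ω × A)*` into `(ω × B)*` iff `f` maps `A` into `B`. -/
lemma mapsTo_star_iff {X : Type u} [TopologicalSpace X] [CompactSpace X]
    {A B : Set X} (hB : IsClopen B) (f : X ≃ₜ X)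
    (F : CechStoneRemainder (ℕ × X) ≃ₜ CechStoneRemainder (ℕ × X))
    (hF : ∀ p : CechStoneRemainder (ℕ × X),
      (F p : StoneCech (ℕ × X)) = betaFOmega f (p : StoneCech (ℕ × X))) :
    Set.MapsTo F (starClopen A) (starClopen B) ↔ Set.MapsTo f A B := by
  constructor
  · intro hmaps
    by_contra hnot
    simp only [Set.MapsTo, not_forall] at hnot
    obtain ⟨x, hxA, hfxB⟩ := hnot
    set S : Set (ℕ × X) := (Set.univ : Set ℕ) ×ˢ ({x} : Set X) with hS
    have hq : ∃ q ∈ closure (stoneCechUnit '' S),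
        q ∉ Set.range (stoneCechUnit : ℕ × X → StoneCech (ℕ × X)) := by
      by_contra hcon
      push_neg at hcon
      have hsub : closure (stoneCechUnit '' S) ⊆
          ⋃ n : ℕ, stoneCechUnit '' (({n} : Set ℕ) ×ˢ (Set.univ : Set X)) := by
        intro q hqc
        obtain ⟨⟨n, y⟩, rfl⟩ := hcon q hqc
        exact Set.mem_iUnion.2 ⟨n, Set.mem_image_of_mem _ (Set.mk_mem_prod rfl trivial)⟩
      have hcl : IsCompact (closure (stoneCechUnit '' S)) := isClosed_closure.isCompact
      obtain ⟨t, ht⟩ := hcl.elim_finite_subcover _ (fun n : ℕ => aux_slice n) hsub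
      obtain ⟨m, hm⟩ := Infinite.exists_notMem_finset t
      have hmem : stoneCechUnit (m, x) ∈ closure (stoneCechUnit '' S) :=
        subset_closure (Set.mem_image_of_mem _ (Set.mk_mem_prod trivial rfl))
      obtain ⟨n, hnt, hn⟩ := Set.mem_iUnion₂.1 (ht hmem)
      have hne : n ≠ m := fun h => hm (h ▸ hnt)
      have hdisj := aux_disjoint (E := (({n} : Set ℕ) ×ˢ (Set.univ : Set X)))
        ((isClopen_discrete _).prod isClopen_univ)
      have h1 : stoneCechUnit (m, x) ∈
          closure (stoneCechUnit '' (({n} : Set ℕ) ×ˢ (Set.univ : Set X))) :=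
        subset_closure hn
      have h2 : stoneCechUnit (m, x) ∈
          closure (stoneCechUnit '' ((({n} : Set ℕ) ×ˢ (Set.univ : Set X))ᶜ)) := by
        refine subset_closure (Set.mem_image_of_mem _ ?_)
        intro hmem2
        exact hne (hmem2.1.symm)
      exact Set.disjoint_left.mp hdisj h1 h2
    obtain ⟨q, hq1, hq2⟩ := hq
    have hqA : (⟨q, hq2⟩ : CechStoneRemainder (ℕ × X)) ∈ starClopen A := by
      refine closure_mono (Set.image_mono (Set.prod_mono le_rfl ?_)) hq1
      simpa using hxA
    have hFB := hmaps hqA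
    have hmem2 : (F ⟨q, hq2⟩ : StoneCech (ℕ × X)) ∈
        closure (stoneCechUnit '' ((Set.univ : Set ℕ) ×ˢ Bᶜ)) := by
      rw [hF]
      have hin : betaFOmega f q ∈ betaFOmega f '' closure (stoneCechUnit '' S) :=
        Set.mem_image_of_mem _ hq1
      have h3 := betaFOmega_image_closure f S hin
      refine closure_mono ?_ h3
      rw [hS, fOmega_image_prod]
      refine Set.image_mono (Set.prod_mono le_rfl ?_)
      rw [Set.image_singleton, Set.singleton_subset_iff]
      exact hfxB
    have hdisjB := aux_disjoint (E := ((Set.univ : Set ℕ) ×ˢ B)) (isClopen_univ.prod hB)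
    have hmem3 : (F ⟨q, hq2⟩ : StoneCech (ℕ × X)) ∈
        closure (stoneCechUnit '' (((Set.univ : Set ℕ) ×ˢ B)ᶜ)) := by
      refine closure_mono (Set.image_mono ?_) hmem2
      rintro ⟨n, y⟩ ⟨-, hy⟩ hmem4
      exact hy hmem4.2
    exact Set.disjoint_left.mp hdisjB hFB hmem3
  · intro hf p hp
    show (F p : StoneCech (ℕ × X)) ∈ closure (stoneCechUnit '' ((Set.univ : Set ℕ) ×ˢ B))
    rw [hF]
    have hin : betaFOmega f (p : StoneCech (ℕ × X)) ∈
        betaFOmega f '' closure (stoneCechUnit '' ((Set.univ : Set ℕ) ×ˢ A)) :=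
      Set.mem_image_of_mem _ hp
    have h3 := betaFOmega_image_closure f ((Set.univ : Set ℕ) ×ˢ A) hin
    refine closure_mono ?_ h3
    rw [fOmega_image_prod]
    exact Set.image_mono (Set.prod_mono le_rfl hf.image_subset)

/-- Refinement lemma: a single compact-open condition on a homeomorphism is implied by a finite
family of clopen-clopen conditions satisfied by it. -/
lemma exists_refine {X : Type} [TopologicalSpace X]
    (hzd : TopologicalSpace.IsTopologicalBasis {s : Set X | IsClopen s})
    {K U : Set X} (hK : IsCompact K) (hU : IsOpen U) {f : X ≃ₜ X}
    (hf : Set.MapsTo (⇑f) K U) :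
    ∃ P : Set (Set X × Set X), P.Finite ∧ (∀ p ∈ P, IsClopen p.1 ∧ IsClopen p.2) ∧
      (∀ p ∈ P, Set.MapsTo (⇑f) p.1 p.2) ∧ (∀ p ∈ P, p.2 ⊆ U) ∧ K ⊆ ⋃ p ∈ P, p.1 := by
  classical
  have key : ∀ x : K, ∃ AB : Set X × Set X, IsClopen AB.1 ∧ IsClopen AB.2 ∧
      (x : X) ∈ AB.1 ∧ AB.2 ⊆ U ∧ Set.MapsTo (⇑f) AB.1 AB.2 := by
    rintro ⟨x, hx⟩
    obtain ⟨B, hB, hfxB, hBU⟩ := hzd.exists_subset_of_mem_open (hf hx) hU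
    obtain ⟨A, hA, hxA, hAB⟩ := hzd.exists_subset_of_mem_open
      (show x ∈ ⇑f ⁻¹' B from hfxB) (hB.2.preimage f.continuous)
    exact ⟨(A, B), hA, hB, hxA, hBU, fun a ha => hAB ha⟩
  choose AB h1 h2 h3 h4 h5 using key
  have hcover : K ⊆ ⋃ x : K, (AB x).1 := fun z hz => Set.mem_iUnion.2 ⟨⟨z, hz⟩, h3 _⟩
  obtain ⟨t, ht⟩ := hK.elim_finite_subcover (fun x : K => (AB x).1) (fun x => (h1 x).2) hcover
  refine ⟨AB '' ↑t, t.finite_toSet.image _, ?_, ?_, ?_, ?_⟩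
  · rintro p ⟨x, -, rfl⟩; exact ⟨h1 x, h2 x⟩
  · rintro p ⟨x, -, rfl⟩; exact h5 x
  · rintro p ⟨x, -, rfl⟩; exact h4 x
  · intro z hz
    obtain ⟨x, hxt, hzx⟩ := Set.mem_iUnion₂.1 (ht hz)
    exact Set.mem_iUnion₂.2 ⟨AB x, ⟨x, hxt, rfl⟩, hzx⟩

/-- Neighborhood lemma: every open set in `H(X)` contains, around each of its points, a finite
intersection of clopen-clopen basic sets. -/
lemma exists_clopen_family {X : Type} [TopologicalSpace X]
    (hzd : TopologicalSpace.IsTopologicalBasis {s : Set X | IsClopen s})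
    {V : Set (X ≃ₜ X)} (hV : IsOpen V) {f : X ≃ₜ X} (hf : f ∈ V) :
    ∃ P : Set (Set X × Set X), P.Finite ∧ (∀ p ∈ P, IsClopen p.1 ∧ IsClopen p.2) ∧
      (∀ p ∈ P, Set.MapsTo (⇑f) p.1 p.2) ∧
      {h : X ≃ₜ X | ∀ p ∈ P, Set.MapsTo (⇑h) p.1 p.2} ⊆ V := by
  classical
  obtain ⟨O, hO, rfl⟩ := isOpen_induced_iff.1 hV
  have hbasis := TopologicalSpace.isTopologicalBasis_of_subbasis
    (ContinuousMap.compactOpen_eq (X := X) (Y := X))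
  obtain ⟨v, hvmem, hfv, hvO⟩ := hbasis.exists_subset_of_mem_open hf hO
  obtain ⟨Fam, ⟨hFamfin, hFamsub⟩, rfl⟩ := hvmem
  have hFam : Finite ↥Fam := hFamfin.to_subtype
  have key : ∀ m : ↥Fam, ∃ P : Set (Set X × Set X), P.Finite ∧
      (∀ p ∈ P, IsClopen p.1 ∧ IsClopen p.2) ∧ (∀ p ∈ P, Set.MapsTo (⇑f) p.1 p.2) ∧
      ∀ h : X ≃ₜ X, (∀ p ∈ P, Set.MapsTo (⇑h) p.1 p.2) → (h : C(X, X)) ∈ (m : Set C(X, X)) := by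
    rintro ⟨m, hm⟩
    obtain ⟨K, hK, U, hU, rfl⟩ := hFamsub hm
    have hfm : Set.MapsTo (⇑f) K U := Set.mem_sInter.1 hfv _ hm
    obtain ⟨P, hPf, hPc, hPm, hPu, hPcov⟩ := exists_refine hzd hK hU hfm
    refine ⟨P, hPf, hPc, hPm, fun h hh z hz => ?_⟩
    obtain ⟨p, hp, hzp⟩ := Set.mem_iUnion₂.1 (hPcov hz)
    exact hPu p hp (hh p hp hzp)
  choose Pm hfin hclop hmaps hsub using key
  refine ⟨⋃ m : ↥Fam, Pm m, Set.finite_iUnion hfin, ?_, ?_, ?_⟩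
  · intro p hp
    obtain ⟨m, hm⟩ := Set.mem_iUnion.1 hp
    exact hclop m p hm
  · intro p hp
    obtain ⟨m, hm⟩ := Set.mem_iUnion.1 hp
    exact hmaps m p hm
  · intro h hh
    refine hvO (Set.mem_sInter.2 fun m hm => ?_)
    exact hsub ⟨m, hm⟩ h fun p hp => hh p (Set.mem_iUnion.2 ⟨⟨m, hm⟩, hp⟩)

end AuxProof

/-- The map `i : H(X) → H(Z*)`, `i f = f^β`, is an open map from `H(X)`
with the compact-open topology onto its image in `H(Z*)` with the compact-open topology. -/
theorem isOpenMap_onto_image_homeoRemainder (X : Type) [TopologicalSpace X]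
    [CompactSpace X] [T2Space X] [Nonempty X]
    (hzd : TopologicalSpace.IsTopologicalBasis {s : Set X | IsClopen s})
    (i : (X ≃ₜ X) → (CechStoneRemainder (ℕ × X) ≃ₜ CechStoneRemainder (ℕ × X)))
    (hi : ∀ (f : X ≃ₜ X) (p : CechStoneRemainder (ℕ × X)),
      ((i f) p : StoneCech (ℕ × X)) = betaFOmega f (p : StoneCech (ℕ × X))) :
    ∀ V : Set (X ≃ₜ X), IsOpen V →
      ∃ W : Set (CechStoneRemainder (ℕ × X) ≃ₜ CechStoneRemainder (ℕ × X)),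
        IsOpen W ∧ i '' V = W ∩ Set.range i := by
  classical
  intro V hV
  choose P hPfin hPclopen hPmaps hPsub using fun f : V => exists_clopen_family hzd hV f.2
  refine ⟨⋃ f : V, ⋂ p ∈ P f,
      {H : CechStoneRemainder (ℕ × X) ≃ₜ CechStoneRemainder (ℕ × X) |
        Set.MapsTo (⇑H) (starClopen p.1) (starClopen p.2)}, ?_, ?_⟩
  · refine isOpen_iUnion fun f => (hPfin f).isOpen_biInter fun p hp => ?_
    have h1 : IsOpen {F : C(CechStoneRemainder (ℕ × X), CechStoneRemainder (ℕ × X)) |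
        Set.MapsTo (⇑F) (starClopen p.1) (starClopen p.2)} :=
      ContinuousMap.isOpen_setOf_mapsTo (starClopen_compact p.1)
        (starClopen_open (hPclopen f p hp).2)
    exact h1.preimage continuous_induced_dom
  · ext w
    constructor
    · rintro ⟨f, hfV, rfl⟩
      refine ⟨Set.mem_iUnion.2 ⟨⟨f, hfV⟩, Set.mem_iInter₂.2 fun p hp => ?_⟩, ⟨f, rfl⟩⟩
      exact (mapsTo_star_iff (hPclopen _ p hp).2 f (i f) (hi f)).2 (hPmaps _ p hp)
    · rintro ⟨hw, g, rfl⟩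
      obtain ⟨f, hf⟩ := Set.mem_iUnion.1 hw
      refine ⟨g, hPsub f fun p hp => ?_, rfl⟩
      exact (mapsTo_star_iff (hPclopen f p hp).2 g (i g) (hi g)).1
        (Set.mem_iInter₂.1 hf p hp)
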